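/- For every k ∈ ℕ and every t ∈ ℝ, the single-integral kernel identity holds: ∫_{0}^{∞} (x^{2k+1}/(2k+1)!) · K(x,t) dx = Σ_{m=0}^{k+1} (−1)^{m−1} (2^{2m} − 2) · (B_{2m}/(2m)!) · (t^{2k+2−2m}/(2k+2−2m)!). In particular the left-hand side is a polynomial of degree 2k+2 in t with leading term t^{2k+2}/(2k+2)!. -/

import Mathlib

/-!
Statement 8: the single-integral kernel identity
`∫_0^∞ (x^{2k+1}/(2k+1)!) K(x,t) dx
   = Σ_{m=0}^{k+1} (−1)^{m−1}(2^{2m}−2)(B_{2m}/(2m)!) t^{2k+2−2m}/(2k+2−2m)!`,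
defining the polynomial `𝔥_{2k+1}(t)`.
-/

noncomputable section

/-- The Mirzakhani kernel `K(x,t) = 1/(1 + e^{π(x+t)}) + 1/(1 + e^{π(x−t)})`. -/
def mirzakhaniK (x t : ℝ) : ℝ :=
  1 / (1 + Real.exp (Real.pi * (x + t))) + 1 / (1 + Real.exp (Real.pi * (x - t)))

/-- The polynomial `𝔥_{2k+1}(t) = Σ_{m=0}^{k+1} (−1)^{m−1}(2^{2m}−2)(B_{2m}/(2m)!)
t^{2k+2−2m}/(2k+2−2m)!` (with `(−1)^{m+1} = (−1)^{m−1}`, also correct for `m = 0`). -/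
def hPoly (k : ℕ) (t : ℝ) : ℝ :=
  ∑ m ∈ Finset.range (k + 2),
    (-1 : ℝ) ^ (m + 1) * (2 ^ (2 * m) - 2) *
      (((bernoulli (2 * m) : ℚ) : ℝ) / Nat.factorial (2 * m)) *
      (t ^ (2 * k + 2 - 2 * m) / Nat.factorial (2 * k + 2 - 2 * m))

open MeasureTheory Real Set Filter

def Hker (y : ℝ) : ℝ := 1 / (1 + Real.exp (Real.pi * y))

lemma Hker_den_pos (y : ℝ) : 0 < 1 + rexp (π * y) := by positivity

lemma Hker_nonneg (y : ℝ) : 0 ≤ Hker y :=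
  le_of_lt (div_pos one_pos (Hker_den_pos y))

lemma Hker_le_exp (y : ℝ) : Hker y ≤ rexp (-(π * y)) := by
  rw [Real.exp_neg]
  rw [Hker, one_div]
  exact inv_anti₀ (exp_pos _) (le_add_of_nonneg_left zero_le_one)

lemma Hker_add_neg (y : ℝ) : Hker y + Hker (-y) = 1 := by
  have h1 := (Hker_den_pos y).ne'
  have h2 := (Hker_den_pos (-y)).ne'
  rw [Hker, Hker] at *
  rw [mul_neg, Real.exp_neg] at *
  have he := (Real.exp_pos (π * y)).ne'
  field_simp
  ring

lemma Hker_cont : Continuous Hker :=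
  continuous_const.div (by continuity) (fun y => (Hker_den_pos y).ne')

lemma Hker_hasSum {x : ℝ} (hx : 0 < x) :
    HasSum (fun n : ℕ => (-1 : ℝ) ^ n * rexp (-(π * (n + 1) * x))) (Hker x) := by
  have hr : ‖-rexp (-(π * x))‖ < 1 := by
    rw [norm_neg, Real.norm_eq_abs, abs_of_pos (exp_pos _)]
    rw [Real.exp_lt_one_iff]
    have := Real.pi_pos
    nlinarith
  have h := (hasSum_geometric_of_norm_lt_one hr).mul_left (rexp (-(π * x)))
  have hval : rexp (-(π * x)) * (1 - -rexp (-(π * x)))⁻¹ = Hker x := by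
    rw [Hker, sub_neg_eq_add]
    rw [eq_div_iff (Hker_den_pos x).ne']
    rw [Real.exp_neg]
    have he := (Real.exp_pos (π * x)).ne'
    field_simp
    ring
  rw [hval] at h
  refine h.congr_fun fun n => ?_
  have he : rexp (-(π * (n + 1) * x)) = rexp (-(π * x)) * rexp (-(π * x)) ^ n := by
    rw [← Real.exp_nat_mul, ← Real.exp_add]
    congr 1
    ring
  rw [he, neg_pow]
  ring

lemma integrable_pow_exp {c : ℝ} (hc : 0 < c) (j : ℕ) :
    IntegrableOn (fun x : ℝ => x ^ j * rexp (-(c * x))) (Ioi 0) := by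
  apply integrable_of_isBigO_exp_neg (half_pos hc) (by fun_prop)
  have h := tendsto_rpow_mul_exp_neg_mul_atTop_nhds_zero (j : ℝ) (c / 2) (half_pos hc)
  have heq : (fun x : ℝ => x ^ (j : ℝ) * rexp (-(c / 2) * x)) =ᶠ[atTop]
      fun x : ℝ => x ^ j * rexp (-(c / 2) * x) := by
    filter_upwards [eventually_gt_atTop (0 : ℝ)] with x hx
    rw [Real.rpow_natCast]
  have h2 : Tendsto (fun x : ℝ => x ^ j * rexp (-(c / 2) * x)) atTop (nhds 0) :=
    (tendsto_congr' heq).mp h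
  have hb : (fun x : ℝ => x ^ j * rexp (-(c / 2) * x)) =O[atTop] (fun _ => (1 : ℝ)) :=
    h2.isBigO_one ℝ
  calc (fun x : ℝ => x ^ j * rexp (-(c * x)))
      = fun x : ℝ => (x ^ j * rexp (-(c / 2) * x)) * rexp (-(c / 2) * x) := by
        funext x
        rw [mul_assoc, ← Real.exp_add]
        ring_nf
    _ =O[atTop] fun x => 1 * rexp (-(c / 2) * x) := hb.mul (Asymptotics.isBigO_refl _ _)
    _ = fun x => rexp (-(c / 2) * x) := by funext x; rw [one_mul]

lemma integral_pow_exp_base (j : ℕ) :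
    ∫ x in Ioi (0 : ℝ), x ^ j * rexp (-x) = (Nat.factorial j : ℝ) := by
  have h := Real.Gamma_eq_integral (s := (j : ℝ) + 1) (by positivity)
  rw [Real.Gamma_nat_eq_factorial] at h
  rw [h]
  apply setIntegral_congr_fun measurableSet_Ioi
  intro x hx
  simp only [add_sub_cancel_right, Real.rpow_natCast]
  ring

lemma integral_pow_exp {c : ℝ} (hc : 0 < c) (j : ℕ) :
    ∫ x in Ioi (0 : ℝ), x ^ j * rexp (-(c * x)) = (Nat.factorial j : ℝ) / c ^ (j + 1) := by
  have h := integral_comp_mul_left_Ioi (fun y : ℝ => y ^ j * rexp (-y)) 0 hc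
  rw [mul_zero] at h
  have h2 : ∀ x : ℝ, (c * x) ^ j * rexp (-(c * x)) = c ^ j * (x ^ j * rexp (-(c * x))) := by
    intro x; rw [mul_pow]; ring
  simp only [h2, integral_pow_exp_base, smul_eq_mul] at h
  rw [integral_const_mul] at h
  have hcj : (c : ℝ) ^ j ≠ 0 := pow_ne_zero _ hc.ne'
  field_simp at h ⊢
  rw [pow_succ]
  nlinarith [h]

lemma integrable_pow_Hker (j : ℕ) (a : ℝ) :
    IntegrableOn (fun x : ℝ => x ^ j * Hker (x + a)) (Ioi 0) := by
  have hmeas : AEStronglyMeasurable (fun x : ℝ => x ^ j * Hker (x + a))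
      (volume.restrict (Ioi 0)) := by
    apply Continuous.aestronglyMeasurable
    exact (continuous_pow j).mul (Hker_cont.comp (continuous_id.add continuous_const))
  have hint : IntegrableOn (fun x : ℝ => rexp (-(π * a)) * (x ^ j * rexp (-(π * x))))
      (Ioi 0) := (integrable_pow_exp Real.pi_pos j).const_mul _
  apply Integrable.mono' hint hmeas
  filter_upwards [ae_restrict_mem measurableSet_Ioi] with x hx
  rw [Real.norm_eq_abs, abs_mul, abs_pow, abs_of_pos (show (0:ℝ) < x from hx),
    abs_of_nonneg (Hker_nonneg _)]
  have h1 : Hker (x + a) ≤ rexp (-(π * (x + a))) := Hker_le_exp _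
  have h2 : rexp (-(π * (x + a))) = rexp (-(π * a)) * rexp (-(π * x)) := by
    rw [← Real.exp_add]; ring_nf
  have h3 : (0:ℝ) ≤ x ^ j := pow_nonneg (le_of_lt hx) j
  calc x ^ j * Hker (x + a) ≤ x ^ j * rexp (-(π * (x + a))) := by
        exact mul_le_mul_of_nonneg_left h1 h3
    _ = rexp (-(π * a)) * (x ^ j * rexp (-(π * x))) := by rw [h2]; ring

lemma integrable_shift_pow_Hker (n : ℕ) (s : ℝ) :
    IntegrableOn (fun u : ℝ => (u + s) ^ n * Hker u) (Ioi 0) := by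
  have heq : (fun u : ℝ => (u + s) ^ n * Hker u)
      = fun u : ℝ => ∑ j ∈ Finset.range (n + 1),
          (s ^ (n - j) * (n.choose j : ℝ)) * (u ^ j * Hker u) := by
    funext u
    rw [add_pow, Finset.sum_mul]
    congr 1 with j
    ring
  rw [heq]
  apply integrable_finset_sum
  intro j _
  have h0 : IntegrableOn (fun x : ℝ => x ^ j * Hker (x + 0)) (Ioi 0) := integrable_pow_Hker j 0
  simp only [add_zero] at h0
  exact h0.const_mul _

lemma hasSum_eta (m : ℕ) (hm : m ≠ 0) :
    HasSum (fun n : ℕ => (-1 : ℝ) ^ n / ((n : ℝ) + 1) ^ (2 * m))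
      ((1 - 2 / 2 ^ (2 * m)) *
        ((-1 : ℝ) ^ (m + 1) * (2 : ℝ) ^ (2 * m - 1) * π ^ (2 * m) *
          bernoulli (2 * m) / (2 * m).factorial)) := by
  set Z : ℝ := (-1 : ℝ) ^ (m + 1) * (2 : ℝ) ^ (2 * m - 1) * π ^ (2 * m) *
      bernoulli (2 * m) / (2 * m).factorial with hZdef
  set a : ℕ → ℝ := fun n => 1 / (n : ℝ) ^ (2 * m) with ha
  have hZ : HasSum a Z := hasSum_zeta_nat hm
  have ha0 : a 0 = 0 := by
    simp [ha, zero_pow (by omega : 2 * m ≠ 0)]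
  have hE : (2 : ℝ) ^ (2 * m) ≠ 0 := by positivity
  have heven : HasSum (fun n => a (2 * n)) (Z / 2 ^ (2 * m)) := by
    have h := hZ.div_const ((2 : ℝ) ^ (2 * m))
    refine h.congr_fun fun n => ?_
    simp only [ha]
    push_cast
    rw [mul_pow]
    rw [div_div]
    ring
  have hodd_sm : Summable (fun n => a (2 * n + 1)) :=
    hZ.summable.comp_injective (fun x y h => by omega)
  have hodd : HasSum (fun n => a (2 * n + 1)) (∑' n, a (2 * n + 1)) := hodd_sm.hasSum
  have htot := heven.even_add_odd hodd
  have hS : ∑' n, a (2 * n + 1) = Z - Z / 2 ^ (2 * m) := by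
    have := htot.unique hZ
    linarith
  rw [hS] at hodd
  -- even part shifted
  have heven1 : HasSum (fun n => a (2 * (n + 1))) (Z / 2 ^ (2 * m)) := by
    have h := (hasSum_nat_add_iff (f := fun n => a (2 * n))
      (g := Z / 2 ^ (2 * m)) 1).mpr
        (by simpa only [Finset.range_one, Finset.sum_singleton, mul_zero, ha0, add_zero]
          using heven)
    exact h
  -- the alternating series
  set g : ℕ → ℝ := fun n => (-1 : ℝ) ^ n / ((n : ℝ) + 1) ^ (2 * m) with hg
  have hge : ∀ n, g (2 * n) = a (2 * n + 1) := by
    intro n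
    simp only [hg, ha, pow_mul, neg_one_sq, one_pow]
    push_cast
    ring
  have hgo : ∀ n, g (2 * n + 1) = -a (2 * (n + 1)) := by
    intro n
    simp only [hg, ha]
    push_cast
    rw [pow_succ, pow_mul, neg_one_sq, one_pow]
    ring_nf
  have hge' : HasSum (fun n => g (2 * n)) (Z - Z / 2 ^ (2 * m)) := by
    simpa only [hge] using hodd
  have hgo' : HasSum (fun n => g (2 * n + 1)) (-(Z / 2 ^ (2 * m))) := by
    simpa only [hgo] using heven1.neg
  have := hge'.even_add_odd hgo'
  convert this using 1
  field_simp
  ring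

lemma Mval (r : ℕ) :
    ∫ x in Ioi (0 : ℝ), x ^ (2 * r + 1) * Hker x
      = (-1 : ℝ) ^ r * (2 ^ (2 * r + 2) - 2) * ((bernoulli (2 * r + 2) : ℚ) : ℝ)
          / (4 * (r + 1)) := by
  set j : ℕ := 2 * r + 1 with hj
  set F : ℕ → ℝ → ℝ := fun n x => (-1 : ℝ) ^ n * (x ^ j * rexp (-(π * (n + 1) * x))) with hF
  have hc : ∀ n : ℕ, (0 : ℝ) < π * (n + 1) := by
    intro n; have := Real.pi_pos; positivity
  have hFint : ∀ n : ℕ, Integrable (F n) (volume.restrict (Ioi 0)) := by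
    intro n
    exact (integrable_pow_exp (hc n) j).const_mul _
  have hnorm : ∀ n : ℕ, (∫ x in Ioi (0:ℝ), ‖F n x‖)
      = (Nat.factorial j : ℝ) / (π * (n + 1)) ^ (j + 1) := by
    intro n
    rw [← integral_pow_exp (hc n) j]
    apply setIntegral_congr_fun measurableSet_Ioi
    intro x hx
    simp only [hF, norm_mul, norm_pow, norm_neg, norm_one, one_pow, one_mul,
      Real.norm_eq_abs, abs_of_pos (show (0:ℝ) < x from hx), abs_of_pos (Real.exp_pos _)]
  have hbase : Summable (fun n : ℕ => 1 / ((n : ℝ) + 1) ^ (j + 1)) := by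
    have h1 := Real.summable_one_div_nat_pow.mpr (show 2 ≤ j + 1 by omega)
    have h2 := (summable_nat_add_iff (f := fun n : ℕ => 1 / (n : ℝ) ^ (j + 1)) 1).mpr h1
    refine h2.congr fun n => ?_
    push_cast
    rfl
  have hsum : Summable (fun n : ℕ => ∫ x in Ioi (0:ℝ), ‖F n x‖) := by
    refine (Summable.congr (hbase.mul_left ((Nat.factorial j : ℝ) / π ^ (j + 1)))
      fun n => ?_)
    rw [hnorm n, mul_pow]
    rw [div_mul_div_comm, mul_one]
  have key := hasSum_integral_of_summable_integral_norm hFint hsum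
  have hintF : ∀ n : ℕ, (∫ x in Ioi (0:ℝ), F n x)
      = (-1 : ℝ) ^ n * ((Nat.factorial j : ℝ) / (π * (n + 1)) ^ (j + 1)) := by
    intro n
    simp only [hF]
    rw [MeasureTheory.integral_const_mul, integral_pow_exp (hc n) j]
  have htsum : ∫ x in Ioi (0:ℝ), (∑' n, F n x) = ∫ x in Ioi (0:ℝ), x ^ j * Hker x := by
    apply setIntegral_congr_fun measurableSet_Ioi
    intro x hx
    have h := (Hker_hasSum (show (0:ℝ) < x from hx)).mul_left (x ^ j)
    have h2 : HasSum (fun n => F n x) (x ^ j * Hker x) := by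
      refine h.congr_fun fun n => ?_
      simp only [hF]
      ring
    exact h2.tsum_eq
  rw [htsum] at key
  -- the other evaluation of the same sum
  have heta := (hasSum_eta (r + 1) (Nat.succ_ne_zero r)).mul_left
    ((Nat.factorial j : ℝ) / π ^ (2 * (r + 1)))
  have hπ : (π : ℝ) ≠ 0 := Real.pi_ne_zero
  have heta' : HasSum (fun n : ℕ => ∫ x in Ioi (0:ℝ), F n x)
      (((Nat.factorial j : ℝ) / π ^ (2 * (r + 1))) *
        ((1 - 2 / 2 ^ (2 * (r + 1))) *
          ((-1 : ℝ) ^ (r + 1 + 1) * (2 : ℝ) ^ (2 * (r + 1) - 1) * π ^ (2 * (r + 1)) *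
            bernoulli (2 * (r + 1)) / (2 * (r + 1)).factorial))) := by
    refine heta.congr_fun fun n => ?_
    rw [hintF n]
    have hj1 : j + 1 = 2 * (r + 1) := by omega
    rw [hj1, mul_pow]
    have hn1 : ((n : ℝ) + 1) ^ (2 * (r + 1)) ≠ 0 := by positivity
    have hπp : (π : ℝ) ^ (2 * (r + 1)) ≠ 0 := pow_ne_zero _ hπ
    field_simp
  have hfinal := key.unique heta'
  rw [hfinal]
  -- now pure arithmetic
  have hexp : 2 * (r + 1) - 1 = 2 * r + 1 := by omega
  have hexp2 : 2 * (r + 1) = 2 * r + 2 := by omega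
  rw [hexp, hexp2]
  have hfac : ((2 * r + 2).factorial : ℝ) = (2 * r + 2) * ((2 * r + 1).factorial : ℝ) := by
    rw [show 2 * r + 2 = (2 * r + 1) + 1 by omega, Nat.factorial_succ]
    push_cast
    ring
  rw [hfac]
  have hπp : (π : ℝ) ^ (2 * r + 2) ≠ 0 := pow_ne_zero _ hπ
  have hfp : ((2 * r + 1).factorial : ℝ) ≠ 0 := by positivity
  have h2p : (2 : ℝ) ^ (2 * r + 2) ≠ 0 := by positivity
  have hr1 : ((2 * r : ℝ) + 2) ≠ 0 := by positivity
  field_simp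
  ring

lemma shift_Ioi (f : ℝ → ℝ) (a d : ℝ) :
    ∫ x in Ioi a, f (x + d) = ∫ x in Ioi (a + d), f x := by
  rw [← integral_indicator measurableSet_Ioi, ← integral_indicator measurableSet_Ioi,
    ← integral_add_right_eq_self ((Ioi (a + d)).indicator f) d]
  congr 1
  funext x
  rw [Set.indicator_apply, Set.indicator_apply]
  by_cases h : a < x
  · rw [if_pos (by simpa using h), if_pos (by simp [h])]
  · rw [if_neg (by simpa using h), if_neg (by simp [h])]

lemma rearrange (n : ℕ) (hn : Odd n) {t : ℝ} (ht : 0 ≤ t) :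
    (∫ x in Ioi (0:ℝ), x ^ n * Hker (x + t)) + (∫ x in Ioi (0:ℝ), x ^ n * Hker (x + -t))
      = (∫ u in Ioi (0:ℝ), ((u + t) ^ n + (u + -t) ^ n) * Hker u)
        + t ^ (n + 1) / (n + 1) := by
  have hcont : ∀ s : ℝ, Continuous (fun u : ℝ => (u + s) ^ n * Hker u) := by
    intro s
    exact ((continuous_id.add continuous_const).pow n).mul Hker_cont
  -- I₁
  have hI1 : (∫ x in Ioi (0:ℝ), x ^ n * Hker (x + t))
      = ∫ u in Ioi t, (u + -t) ^ n * Hker u := by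
    have h := shift_Ioi (fun u : ℝ => (u + -t) ^ n * Hker u) 0 t
    rw [zero_add] at h
    rw [← h]
    congr 1
    funext x
    congr 2
    ring
  have hI2 : (∫ x in Ioi (0:ℝ), x ^ n * Hker (x + -t))
      = ∫ u in Ioi (-t), (u + t) ^ n * Hker u := by
    have h := shift_Ioi (fun u : ℝ => (u + t) ^ n * Hker u) 0 (-t)
    rw [zero_add] at h
    rw [← h]
    congr 1
    funext x
    congr 2
    ring
  -- split the I₂ integral at 0
  have hsplit2 : (∫ u in Ioi (-t), (u + t) ^ n * Hker u)
      = (∫ u in Ioc (-t) 0, (u + t) ^ n * Hker u) + ∫ u in Ioi (0:ℝ), (u + t) ^ n * Hker u := by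
    rw [← setIntegral_union (Set.Ioc_disjoint_Ioi le_rfl) measurableSet_Ioi
      ((hcont t).continuousOn.integrableOn_compact isCompact_Icc |>.mono_set Ioc_subset_Icc_self)
      (integrable_shift_pow_Hker n t)]
    rw [Set.Ioc_union_Ioi_eq_Ioi (neg_nonpos.mpr ht)]
  -- split the Ioi 0 integral of (u - t)^n at t
  have hsplit1 : (∫ u in Ioi (0:ℝ), (u + -t) ^ n * Hker u)
      = (∫ u in Ioc 0 t, (u + -t) ^ n * Hker u) + ∫ u in Ioi t, (u + -t) ^ n * Hker u := by
    rw [← setIntegral_union (Set.Ioc_disjoint_Ioi le_rfl) measurableSet_Ioi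
      ((hcont (-t)).continuousOn.integrableOn_compact isCompact_Icc |>.mono_set Ioc_subset_Icc_self)
      ((integrable_shift_pow_Hker n (-t)).mono_set (Ioi_subset_Ioi ht))]
    rw [Set.Ioc_union_Ioi_eq_Ioi ht]
  -- the middle piece J
  have hJ : (∫ u in Ioc (-t) 0, (u + t) ^ n * Hker u)
      = t ^ (n + 1) / (n + 1) + ∫ u in Ioc 0 t, (u + -t) ^ n * Hker u := by
    have h1 : (∫ u in Ioc (-t) 0, (u + t) ^ n * Hker u)
        = ∫ u in (-t)..0, (u + t) ^ n * Hker u := by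
      rw [intervalIntegral.integral_of_le (neg_nonpos.mpr ht)]
    have h2 : (∫ u in (-t)..(0:ℝ), (u + t) ^ n * Hker u)
        = ∫ y in (0:ℝ)..t, (t - y) ^ n * Hker (-y) := by
      have hc : (∫ y in (0:ℝ)..t, (t - y) ^ n * Hker (-y))
          = ∫ y in (0:ℝ)..t, (fun u : ℝ => (u + t) ^ n * Hker u) (-y) := by
        congr 1
        funext y
        simp only []
        congr 2
        ring
      rw [hc, intervalIntegral.integral_comp_neg fun u => (u + t) ^ n * Hker u]
      simp only [neg_zero]
    have h3 : (∫ y in (0:ℝ)..t, (t - y) ^ n * Hker (-y))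
        = (∫ y in (0:ℝ)..t, (t - y) ^ n) - ∫ y in (0:ℝ)..t, (t - y) ^ n * Hker y := by
      have hcc : ∀ y : ℝ, (t - y) ^ n * Hker (-y) = (t - y) ^ n - (t - y) ^ n * Hker y := by
        intro y
        have h := Hker_add_neg y
        have h' : Hker (-y) = 1 - Hker y := by linarith
        rw [h']
        ring
      simp only [hcc]
      rw [intervalIntegral.integral_sub]
      · exact (Continuous.intervalIntegrable (by continuity) _ _)
      · exact (Continuous.intervalIntegrable ((by continuity : Continuous fun y:ℝ => (t-y)^n).mul Hker_cont) _ _)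
    have h4 : (∫ y in (0:ℝ)..t, (t - y) ^ n) = t ^ (n + 1) / (n + 1) := by
      rw [intervalIntegral.integral_comp_sub_left (fun x => x ^ n) t]
      simp [integral_pow]
    have h5 : (∫ y in (0:ℝ)..t, (t - y) ^ n * Hker y)
        = - ∫ u in Ioc 0 t, (u + -t) ^ n * Hker u := by
      rw [intervalIntegral.integral_of_le ht, ← MeasureTheory.integral_neg]
      congr 1
      funext y
      have hodd : (t - y) ^ n = -((y + -t) ^ n) := by
        rw [← Odd.neg_pow hn]
        congr 1
        ring
      rw [hodd]
      ring
    rw [h1, h2, h3, h4, h5]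
    ring
  -- combine
  have hcomb : (∫ u in Ioi (0:ℝ), (u + -t) ^ n * Hker u) + (∫ u in Ioi (0:ℝ), (u + t) ^ n * Hker u)
      = ∫ u in Ioi (0:ℝ), ((u + t) ^ n + (u + -t) ^ n) * Hker u := by
    rw [← MeasureTheory.integral_add (integrable_shift_pow_Hker n (-t)) (integrable_shift_pow_Hker n t)]
    congr 1
    funext u
    ring
  rw [hI1, hI2, hsplit2, hJ]
  have hIoiT : (∫ u in Ioi t, (u + -t) ^ n * Hker u)
      = (∫ u in Ioi (0:ℝ), (u + -t) ^ n * Hker u) - ∫ u in Ioc 0 t, (u + -t) ^ n * Hker u := by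
    rw [hsplit1]; ring
  rw [hIoiT, ← hcomb]
  ring

lemma mirz_eq (x t : ℝ) : mirzakhaniK x t = Hker (x + t) + Hker (x + -t) := by
  rw [mirzakhaniK, Hker, Hker, sub_eq_add_neg]

lemma sum_range_pair (K : ℕ) (f : ℕ → ℝ) :
    ∑ j ∈ Finset.range (2 * K), f j
      = ∑ m ∈ Finset.range K, (f (2 * m) + f (2 * m + 1)) := by
  induction K with
  | zero => simp
  | succ K ih =>
    rw [Finset.sum_range_succ, ← ih, show 2 * (K + 1) = 2 * K + 1 + 1 by omega,
      Finset.sum_range_succ, Finset.sum_range_succ]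
    ring

lemma binom_step (n : ℕ) (t : ℝ) :
    (∫ u in Ioi (0:ℝ), ((u + t) ^ n + (u + -t) ^ n) * Hker u)
      = ∑ j ∈ Finset.range (n + 1),
          ((n.choose j : ℝ) * (t ^ (n - j) + (-t) ^ (n - j))) *
            ∫ u in Ioi (0:ℝ), u ^ j * Hker u := by
  have hint : ∀ j : ℕ, IntegrableOn (fun u : ℝ => u ^ j * Hker u) (Ioi 0) := by
    intro j
    have h0 := integrable_pow_Hker j 0
    simpa using h0
  have hexp : (fun u : ℝ => ((u + t) ^ n + (u + -t) ^ n) * Hker u)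
      = fun u : ℝ => ∑ j ∈ Finset.range (n + 1),
          ((n.choose j : ℝ) * (t ^ (n - j) + (-t) ^ (n - j))) * (u ^ j * Hker u) := by
    funext u
    rw [add_pow, add_pow, ← Finset.sum_add_distrib, Finset.sum_mul]
    congr 1 with j
    ring
  rw [hexp, integral_finset_sum]
  · congr 1 with j
    rw [MeasureTheory.integral_const_mul]
  · intro j _
    exact (hint j).const_mul _

theorem kernel_single_integral_nonneg (k : ℕ) {t : ℝ} (ht : 0 ≤ t) :
    ∫ x in Set.Ioi (0 : ℝ),
        x ^ (2 * k + 1) / Nat.factorial (2 * k + 1) * mirzakhaniK x t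
      = hPoly k t := by
  set n : ℕ := 2 * k + 1 with hn
  have hfac_ne : ((n.factorial : ℝ)) ≠ 0 := by positivity
  have step1 : (∫ x in Set.Ioi (0 : ℝ), x ^ n / Nat.factorial n * mirzakhaniK x t)
      = ((n.factorial : ℝ))⁻¹ *
        ((∫ x in Ioi (0:ℝ), x ^ n * Hker (x + t)) +
          (∫ x in Ioi (0:ℝ), x ^ n * Hker (x + -t))) := by
    rw [← MeasureTheory.integral_add (integrable_pow_Hker n t) (integrable_pow_Hker n (-t)),
      ← MeasureTheory.integral_const_mul]
    apply setIntegral_congr_fun measurableSet_Ioi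
    intro x _
    simp only []
    rw [mirz_eq]
    field_simp
  rw [step1, rearrange n ⟨k, by omega⟩ ht, binom_step n t]
  have hpair := sum_range_pair (k + 1) (fun j =>
    ((n.choose j : ℝ) * (t ^ (n - j) + (-t) ^ (n - j))) *
      ∫ u in Ioi (0:ℝ), u ^ j * Hker u)
  rw [show n + 1 = 2 * (k + 1) by omega]
  rw [hpair]
  -- even-index terms vanish
  have heven0 : ∀ m ∈ Finset.range (k + 1),
      ((n.choose (2 * m) : ℝ) * (t ^ (n - 2 * m) + (-t) ^ (n - 2 * m))) *
        (∫ u in Ioi (0:ℝ), u ^ (2 * m) * Hker u) = 0 := by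
    intro m hm
    rw [Finset.mem_range] at hm
    have hodd : Odd (n - 2 * m) := ⟨k - m, by omega⟩
    rw [Odd.neg_pow hodd]
    ring
  have hterm : ∀ m ∈ Finset.range (k + 1),
      (((n.choose (2 * m) : ℝ) * (t ^ (n - 2 * m) + (-t) ^ (n - 2 * m))) *
          (∫ u in Ioi (0:ℝ), u ^ (2 * m) * Hker u) +
        ((n.choose (2 * m + 1) : ℝ) * (t ^ (n - (2 * m + 1)) + (-t) ^ (n - (2 * m + 1)))) *
          (∫ u in Ioi (0:ℝ), u ^ (2 * m + 1) * Hker u))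
      = (n.factorial : ℝ) *
          ((-1 : ℝ) ^ (m + 1 + 1) * (2 ^ (2 * (m + 1)) - 2) *
            (((bernoulli (2 * (m + 1)) : ℚ) : ℝ) / Nat.factorial (2 * (m + 1))) *
            (t ^ (2 * k + 2 - 2 * (m + 1)) / Nat.factorial (2 * k + 2 - 2 * (m + 1)))) := by
    intro m hm
    rw [heven0 m hm, zero_add]
    rw [Finset.mem_range] at hm
    have heq1 : n - (2 * m + 1) = 2 * (k - m) := by omega
    have heq2 : 2 * k + 2 - 2 * (m + 1) = 2 * (k - m) := by omega
    rw [heq1, heq2, Even.neg_pow (even_two_mul _), Mval m]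
    have hch : ((n.choose (2 * m + 1) : ℝ)) * ((2 * m + 1).factorial : ℝ) *
        (((2 * (k - m)).factorial : ℝ)) = (n.factorial : ℝ) := by
      have h := Nat.choose_mul_factorial_mul_factorial (show 2 * m + 1 ≤ n by omega)
      rw [show n - (2 * m + 1) = 2 * (k - m) by omega] at h
      exact_mod_cast h
    have hfac2 : ((2 * (m + 1)).factorial : ℝ)
        = (2 * m + 2) * ((2 * m + 1).factorial : ℝ) := by
      rw [show 2 * (m + 1) = (2 * m + 1) + 1 by omega, Nat.factorial_succ]
      push_cast
      ring
    rw [hfac2]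
    have hne1 : ((2 * m + 1).factorial : ℝ) ≠ 0 := by positivity
    have hne2 : (((2 * (k - m)).factorial : ℝ)) ≠ 0 := by positivity
    have hne3 : ((2 * m : ℝ) + 2) ≠ 0 := by positivity
    have hne4 : ((4 : ℝ) * (m + 1)) ≠ 0 := by positivity
    have hchoose : ((n.choose (2 * m + 1) : ℝ))
        = (n.factorial : ℝ) / (((2 * m + 1).factorial : ℝ) * ((2 * (k - m)).factorial : ℝ)) := by
      field_simp
      linarith [hch]
    rw [hchoose]
    push_cast
    field_simp
    ring
  rw [Finset.sum_congr rfl hterm, ← Finset.mul_sum]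
  unfold hPoly
  conv_rhs => rw [Finset.sum_range_succ']
  rw [mul_add, ← mul_assoc, inv_mul_cancel₀ hfac_ne, one_mul]
  congr 1
  -- the m = 0 term
  simp only [Nat.mul_zero, pow_zero, bernoulli_zero, Nat.sub_zero, Nat.factorial_zero,
    Nat.cast_one, Rat.cast_one, pow_one, zero_add]
  have e1 : 2 * k + 2 = 2 * (k + 1) := by omega
  rw [e1]
  have hfack : ((2 * (k + 1)).factorial : ℝ) = ((n : ℝ) + 1) * (n.factorial : ℝ) := by
    rw [show 2 * (k + 1) = n + 1 by omega, Nat.factorial_succ]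
    push_cast
    ring
  rw [hfack]
  have h1 : ((n : ℝ) + 1) ≠ 0 := by positivity
  field_simp

  ring

/-- The single-integral identity
`∫_0^∞ (x^{2k+1}/(2k+1)!) K(x,t) dx = 𝔥_{2k+1}(t)`. -/
theorem kernel_single_integral (k : ℕ) (t : ℝ) :
    ∫ x in Set.Ioi (0 : ℝ),
        x ^ (2 * k + 1) / Nat.factorial (2 * k + 1) * mirzakhaniK x t
      = hPoly k t := by
  rcases le_total 0 t with ht | ht
  · exact kernel_single_integral_nonneg k ht
  · have h := kernel_single_integral_nonneg k (neg_nonneg.mpr ht)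
    have hK : ∀ x : ℝ, mirzakhaniK x (-t) = mirzakhaniK x t := by
      intro x
      rw [mirzakhaniK, mirzakhaniK, show x + -t = x - t by ring, show x - -t = x + t by ring]
      ring
    have hH : hPoly k (-t) = hPoly k t := by
      unfold hPoly
      apply Finset.sum_congr rfl
      intro m hm
      rw [Finset.mem_range] at hm
      rw [Even.neg_pow (show Even (2 * k + 2 - 2 * m) from ⟨k + 1 - m, by omega⟩) t]
    rw [← hH, ← h]
    apply setIntegral_congr_fun measurableSet_Ioi
    intro x _
    simp only []
    rw [hK]

end
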